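/- Consider the two-piece convex knapsack problem (CK) with the additional assumptions that γ_j ≤ 0 and u_j ≤ Ω for every j ∈ [n], the items indexed in non-increasing profit-density order p_1(u_1)/u_1 ≥ … ≥ p_n(u_n)/u_n, and P_min = max( max_{j∈[n]} p_j(u_j), max { Σ_{j∈[k]} p_j(u_j) : k ∈ {0,…,n}, Σ_{j∈[k]} u_j ≤ Ω } ), which satisfies P_min > 0. Let 0 < ε < 1 and K = ε·P_min/n. For f ∈ [n] define p̂_f(Δ) = p_f(min(Δ, u_f)) for Δ ≥ 0, and set p̂_{n+1}(Δ) = 0 for Δ ≥ 0. Then max { K·Σ_{j∈J} ⌊p_j(u_j)/K⌋ + p̂_f(Ω − Σ_{j∈J} u_j) : f ∈ [n] ∪ {n+1}, J ⊆ [n] \ {f}, Σ_{j∈J} u_j ≤ Ω } ≥ (1 − ε)·P*. (This is the approximation guarantee of the scaling-and-rounding FPTAS.) -/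

import Mathlib

open Finset

lemma twopiece_convex (γ β : ℝ) (x0 x1 x2 lam : ℝ) (hl0 : 0 ≤ lam) (hl1 : lam ≤ 1)
    (hx : x0 = lam * x1 + (1 - lam) * x2) :
    max (γ + β * x0) 0 ≤ lam * max (γ + β * x1) 0 + (1 - lam) * max (γ + β * x2) 0 := by
  rcases le_or_gt (γ + β * x0) 0 with h | h
  · have h1 : 0 ≤ lam * max (γ + β * x1) 0 := mul_nonneg hl0 (le_max_right _ _)
    have h2 : 0 ≤ (1 - lam) * max (γ + β * x2) 0 := mul_nonneg (by linarith) (le_max_right _ _)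
    simpa [max_eq_right h] using add_nonneg h1 h2
  · have heq : γ + β * x0 = lam * (γ + β * x1) + (1 - lam) * (γ + β * x2) := by
      rw [hx]; ring
    calc max (γ + β * x0) 0 = γ + β * x0 := max_eq_left h.le
      _ = lam * (γ + β * x1) + (1 - lam) * (γ + β * x2) := heq
      _ ≤ _ := add_le_add (mul_le_mul_of_nonneg_left (le_max_left _ _) hl0)
          (mul_le_mul_of_nonneg_left (le_max_left _ _) (by linarith))

lemma vertex_step (n : ℕ) (γ β u : Fin n → ℝ) (Ω Pstar : ℝ)
    (hPstar : IsGreatest ((fun x : Fin n → ℝ => ∑ j, max (γ j + β j * x j) 0) ''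
        {x | (∀ j, 0 ≤ x j ∧ x j ≤ u j) ∧ ∑ j, x j ≤ Ω}) Pstar)
    (x : Fin n → ℝ) (hxb : ∀ j, 0 ≤ x j ∧ x j ≤ u j) (hxs : ∑ j, x j ≤ Ω)
    (hxv : ∑ j, max (γ j + β j * x j) 0 = Pstar)
    (i j : Fin n) (hij : i ≠ j) (hi : 0 < x i ∧ x i < u i) (hj : 0 < x j ∧ x j < u j) :
    ∃ y : Fin n → ℝ, (∀ m, 0 ≤ y m ∧ y m ≤ u m) ∧ (∑ m, y m ≤ Ω) ∧
      (∑ m, max (γ m + β m * y m) 0 = Pstar) ∧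
      (Finset.univ.filter (fun m => 0 < y m ∧ y m < u m)).card <
        (Finset.univ.filter (fun m => 0 < x m ∧ x m < u m)).card := by
  set a := min (x i) (u j - x j) with ha_def
  set b := min (u i - x i) (x j) with hb_def
  have ha : 0 < a := lt_min hi.1 (by linarith [hj.2])
  have hb : 0 < b := lt_min (by linarith [hi.2]) hj.1
  have ha1 : a ≤ x i := min_le_left _ _
  have ha2 : a ≤ u j - x j := min_le_right _ _
  have hb1 : b ≤ u i - x i := min_le_left _ _
  have hb2 : b ≤ x j := min_le_right _ _
  set Y : ℝ → Fin n → ℝ := fun t m => if m = i then x i + t else if m = j then x j - t else x m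
    with hY_def
  have hYi : ∀ t, Y t i = x i + t := fun t => by simp [hY_def]
  have hYj : ∀ t, Y t j = x j - t := fun t => by simp [hY_def, hij.symm]
  have hYm : ∀ t m, m ≠ i → m ≠ j → Y t m = x m := fun t m h1 h2 => by simp [hY_def, h1, h2]
  have hYsum : ∀ t, ∑ m, Y t m = ∑ m, x m := by
    intro t
    have h1 : ∀ m : Fin n, Y t m - x m =
        (if m = i then t else 0) + (if m = j then -t else 0) := by
      intro m
      by_cases h1 : m = i
      · subst h1; simp [hYi, hij]
      · by_cases h2 : m = j
        · subst h2; simp [hYj, h1]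
        · simp [hYm t m h1 h2, h1, h2]
    have h2 : ∑ m, (Y t m - x m) = 0 := by
      rw [Finset.sum_congr rfl (fun m _ => h1 m), Finset.sum_add_distrib]
      simp [Finset.sum_ite_eq']
    have h3 : ∑ m, (Y t m - x m) = ∑ m, Y t m - ∑ m, x m := Finset.sum_sub_distrib _ _
    linarith [h3 ▸ h2]
  have hY0 : Y 0 = x := by
    funext m
    by_cases h1 : m = i
    · subst h1; simp [hYi]
    · by_cases h2 : m = j
      · subst h2; simp [hYj]
      · exact hYm 0 m h1 h2
  -- feasibility of endpoints
  have hbndA : ∀ m, 0 ≤ Y (-a) m ∧ Y (-a) m ≤ u m := by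
    intro m
    by_cases h1 : m = i
    · subst h1; rw [hYi]
      constructor
      · linarith
      · linarith [(hxb m).2, ha]
    · by_cases h2 : m = j
      · subst h2; rw [hYj]
        constructor
        · linarith [(hxb m).1, ha]
        · linarith
      · rw [hYm _ m h1 h2]; exact hxb m
  have hbndB : ∀ m, 0 ≤ Y b m ∧ Y b m ≤ u m := by
    intro m
    by_cases h1 : m = i
    · subst h1; rw [hYi]
      constructor
      · linarith [(hxb m).1, hb]
      · linarith
    · by_cases h2 : m = j
      · subst h2; rw [hYj]
        constructor
        · linarith
        · linarith [(hxb m).2, hb]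
      · rw [hYm _ m h1 h2]; exact hxb m
  -- convex combination
  set lam : ℝ := b / (a + b) with hlam_def
  have hab : 0 < a + b := by linarith
  have hlam0 : 0 < lam := div_pos hb hab
  have hlam1 : lam < 1 := by
    rw [hlam_def, div_lt_one hab]; linarith
  have hkey : lam * a = (1 - lam) * b := by
    rw [hlam_def, div_mul_eq_mul_div, one_sub_div hab.ne', div_mul_eq_mul_div]; ring
  have hcomb : ∀ m, Y 0 m = lam * Y (-a) m + (1 - lam) * Y b m := by
    intro m
    by_cases h1 : m = i
    · subst h1; rw [hYi, hYi, hYi]; nlinarith [hkey]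
    · by_cases h2 : m = j
      · subst h2; rw [hYj, hYj, hYj]; nlinarith [hkey]
      · rw [hYm _ m h1 h2, hYm _ m h1 h2, hYm _ m h1 h2]; ring
  set A := ∑ m, max (γ m + β m * Y (-a) m) 0 with hA_def
  set B := ∑ m, max (γ m + β m * Y b m) 0 with hB_def
  have hconv : Pstar ≤ lam * A + (1 - lam) * B := by
    have h1 : ∑ m, max (γ m + β m * Y 0 m) 0 ≤ lam * A + (1 - lam) * B := by
      rw [hA_def, hB_def, Finset.mul_sum, Finset.mul_sum, ← Finset.sum_add_distrib]
      exact Finset.sum_le_sum fun m _ =>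
        twopiece_convex (γ m) (β m) _ _ _ lam hlam0.le hlam1.le (hcomb m)
    rw [hY0] at h1; rw [← hxv]; exact h1
  have hAle : A ≤ Pstar := hPstar.2 ⟨Y (-a), ⟨hbndA, (hYsum (-a)).le.trans hxs⟩, rfl⟩
  have hBle : B ≤ Pstar := hPstar.2 ⟨Y b, ⟨hbndB, (hYsum b).le.trans hxs⟩, rfl⟩
  have hor : A = Pstar ∨ B = Pstar := by
    by_contra hcon
    push_neg at hcon
    have hA' : A < Pstar := lt_of_le_of_ne hAle hcon.1
    have hB' : B < Pstar := lt_of_le_of_ne hBle hcon.2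
    nlinarith
  -- subset fact holds for any t
  have hsub : ∀ t, (Finset.univ.filter (fun m => 0 < Y t m ∧ Y t m < u m)) ⊆
      (Finset.univ.filter (fun m => 0 < x m ∧ x m < u m)) := by
    intro t m hm
    rw [Finset.mem_filter] at hm ⊢
    refine ⟨Finset.mem_univ m, ?_⟩
    by_cases h1 : m = i
    · subst h1; exact hi
    · by_cases h2 : m = j
      · subst h2; exact hj
      · have h3 := hm.2
        rwa [hYm t m h1 h2] at h3
  rcases hor with hA | hB
  · refine ⟨Y (-a), hbndA, (hYsum (-a)).le.trans hxs, hA, ?_⟩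
    apply Finset.card_lt_card
    rw [Finset.ssubset_iff_of_subset (hsub (-a))]
    rcases le_total (x i) (u j - x j) with hm | hm
    · refine ⟨i, Finset.mem_filter.mpr ⟨Finset.mem_univ i, hi⟩, ?_⟩
      have : Y (-a) i = 0 := by rw [hYi, ha_def, min_eq_left hm]; ring
      simp [this]
    · refine ⟨j, Finset.mem_filter.mpr ⟨Finset.mem_univ j, hj⟩, ?_⟩
      have : Y (-a) j = u j := by rw [hYj, ha_def, min_eq_right hm]; ring
      simp [this]
  · refine ⟨Y b, hbndB, (hYsum b).le.trans hxs, hB, ?_⟩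
    apply Finset.card_lt_card
    rw [Finset.ssubset_iff_of_subset (hsub b)]
    rcases le_total (u i - x i) (x j) with hm | hm
    · refine ⟨i, Finset.mem_filter.mpr ⟨Finset.mem_univ i, hi⟩, ?_⟩
      have : Y b i = u i := by rw [hYi, hb_def, min_eq_left hm]; ring
      simp [this]
    · refine ⟨j, Finset.mem_filter.mpr ⟨Finset.mem_univ j, hj⟩, ?_⟩
      have : Y b j = 0 := by rw [hYj, hb_def, min_eq_right hm]; ring
      simp [this]

lemma exists_vertex_opt (n : ℕ) (γ β u : Fin n → ℝ) (Ω Pstar : ℝ)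
    (hPstar : IsGreatest ((fun x : Fin n → ℝ => ∑ j, max (γ j + β j * x j) 0) ''
        {x | (∀ j, 0 ≤ x j ∧ x j ≤ u j) ∧ ∑ j, x j ≤ Ω}) Pstar) :
    ∃ x : Fin n → ℝ, (∀ j, 0 ≤ x j ∧ x j ≤ u j) ∧ (∑ j, x j ≤ Ω) ∧
      (∑ j, max (γ j + β j * x j) 0 = Pstar) ∧
      (Finset.univ.filter (fun m => 0 < x m ∧ x m < u m)).card ≤ 1 := by
  obtain ⟨x0, hx0mem, hx0val⟩ := hPstar.1
  have hmain : ∀ N : ℕ, ∀ x : Fin n → ℝ,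
      (Finset.univ.filter (fun m => 0 < x m ∧ x m < u m)).card ≤ N →
      (∀ j, 0 ≤ x j ∧ x j ≤ u j) → (∑ j, x j ≤ Ω) →
      (∑ j, max (γ j + β j * x j) 0 = Pstar) →
      ∃ y : Fin n → ℝ, (∀ j, 0 ≤ y j ∧ y j ≤ u j) ∧ (∑ j, y j ≤ Ω) ∧
        (∑ j, max (γ j + β j * y j) 0 = Pstar) ∧
        (Finset.univ.filter (fun m => 0 < y m ∧ y m < u m)).card ≤ 1 := by
    intro N
    induction N with
    | zero => intro x hc hb hs hv; exact ⟨x, hb, hs, hv, le_trans hc (by norm_num)⟩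
    | succ N ih =>
      intro x hc hb hs hv
      by_cases hle : (Finset.univ.filter (fun m => 0 < x m ∧ x m < u m)).card ≤ 1
      · exact ⟨x, hb, hs, hv, hle⟩
      · push_neg at hle
        obtain ⟨i, hi, j, hj, hij⟩ := Finset.one_lt_card.mp hle
        obtain ⟨y, hyb, hys, hyv, hylt⟩ := vertex_step n γ β u Ω Pstar hPstar x hb hs hv i j hij
          (Finset.mem_filter.mp hi).2 (Finset.mem_filter.mp hj).2
        exact ih y (by omega) hyb hys hyv
  exact hmain _ x0 le_rfl hx0mem.1 hx0mem.2 hx0val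




/-- Proposition 5 (FPTAS guarantee): the best value obtainable from the scaled
and rounded profits (over a choice of excluded item `f ∈ [n] ∪ {n+1}`, encoded
by `Option (Fin n)` with `none` playing the role of `n+1`, and a feasible fully
selected set `J`) is at least `(1 − ε)·P*`. -/
theorem stmt_15 (n : ℕ) (hn : 1 ≤ n) (γ β u : Fin n → ℝ)
    (hβ : ∀ j, 0 < β j) (hu : ∀ j, 0 < u j) (hpos : ∀ j, 0 < γ j + β j * u j)
    (Ω : ℝ) (hΩ : 0 < Ω)
    (hγ : ∀ j, γ j ≤ 0) (huΩ : ∀ j, u j ≤ Ω)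
    (hdens : ∀ i j : Fin n, i ≤ j →
      (γ j + β j * u j) / u j ≤ (γ i + β i * u i) / u i)
    (Pstar : ℝ)
    (hPstar : IsGreatest ((fun x : Fin n → ℝ => ∑ j, max (γ j + β j * x j) 0) ''
        {x | (∀ j, 0 ≤ x j ∧ x j ≤ u j) ∧ ∑ j, x j ≤ Ω}) Pstar)
    (PR : ℝ)
    (hPR : IsGreatest {v : ℝ | ∃ k ≤ n,
        (∑ j ∈ Finset.univ.filter (fun j : Fin n => (j : ℕ) < k), u j ≤ Ω) ∧
        v = ∑ j ∈ Finset.univ.filter (fun j : Fin n => (j : ℕ) < k),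
          (γ j + β j * u j)} PR)
    (Pmax : ℝ)
    (hPmax : IsGreatest {v : ℝ | ∃ j : Fin n, v = γ j + β j * u j} Pmax)
    (Pmin : ℝ) (hPmin : Pmin = max Pmax PR) (hPminpos : 0 < Pmin)
    (ε : ℝ) (hε0 : 0 < ε) (hε1 : ε < 1)
    (K : ℝ) (hK : K = ε * Pmin / n)
    (phat : Option (Fin n) → ℝ → ℝ)
    (hphatnone : ∀ Δ : ℝ, 0 ≤ Δ → phat none Δ = 0)
    (hphatsome : ∀ (f : Fin n) (Δ : ℝ), 0 ≤ Δ →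
      phat (some f) Δ = max (γ f + β f * min Δ (u f)) 0) :
    (1 - ε) * Pstar ≤
      sSup {v : ℝ | ∃ (f : Option (Fin n)) (J : Finset (Fin n)),
        (∀ j ∈ J, some j ≠ f) ∧ (∑ j ∈ J, u j ≤ Ω) ∧
        v = K * (∑ j ∈ J, (⌊(γ j + β j * u j) / K⌋ : ℝ)) +
          phat f (Ω - ∑ j ∈ J, u j)} := by
  haveI : Nonempty (Fin n) := ⟨⟨0, hn⟩⟩
  have hn0 : (0:ℝ) < n := by exact_mod_cast hn
  have hKpos : 0 < K := by rw [hK]; positivity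
  -- Pmax ≤ Pstar
  have hPmaxle : Pmax ≤ Pstar := by
    obtain ⟨j0, hj0⟩ := hPmax.1
    set xj : Fin n → ℝ := fun m => if m = j0 then u j0 else 0 with hxj
    have hfeas : (∀ m, 0 ≤ xj m ∧ xj m ≤ u m) ∧ ∑ m, xj m ≤ Ω := by
      constructor
      · intro m
        by_cases h : m = j0
        · subst h; simp [hxj, (hu m).le]
        · simp [hxj, h, (hu m).le]
      · have : ∑ m, xj m = u j0 := by simp [hxj]
        rw [this]; exact huΩ j0
    have hval : (∑ m, max (γ m + β m * xj m) 0) ≤ Pstar :=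
      hPstar.2 ⟨xj, hfeas, rfl⟩
    have h1 : γ j0 + β j0 * u j0 ≤ ∑ m, max (γ m + β m * xj m) 0 := by
      have h2 : γ j0 + β j0 * u j0 ≤ max (γ j0 + β j0 * xj j0) 0 := by
        have : xj j0 = u j0 := by simp [hxj]
        rw [this]; exact le_max_left _ _
      exact le_trans h2 (Finset.single_le_sum (f := fun m => max (γ m + β m * xj m) 0)
        (fun m _ => le_max_right _ _) (Finset.mem_univ j0))
    rw [hj0]; exact le_trans h1 hval
  -- PR ≤ Pstar
  have hPRle : PR ≤ Pstar := by
    obtain ⟨k, hk, hkfeas, hkval⟩ := hPR.1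
    set xr : Fin n → ℝ := fun m => if (m:ℕ) < k then u m else 0 with hxr
    have hsum : ∑ m, xr m = ∑ m ∈ Finset.univ.filter (fun j : Fin n => (j : ℕ) < k), u m := by
      rw [Finset.sum_filter]
    have hfeas : (∀ m, 0 ≤ xr m ∧ xr m ≤ u m) ∧ ∑ m, xr m ≤ Ω := by
      refine ⟨fun m => ?_, by rw [hsum]; exact hkfeas⟩
      by_cases h : (m:ℕ) < k
      · simp [hxr, h, (hu m).le]
      · simp [hxr, h, (hu m).le]
    have hval : (∑ m, max (γ m + β m * xr m) 0) ≤ Pstar := hPstar.2 ⟨xr, hfeas, rfl⟩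
    have h1 : PR ≤ ∑ m, max (γ m + β m * xr m) 0 := by
      rw [hkval]
      calc ∑ m ∈ Finset.univ.filter (fun j : Fin n => (j : ℕ) < k), (γ m + β m * u m)
          ≤ ∑ m ∈ Finset.univ.filter (fun j : Fin n => (j : ℕ) < k),
            max (γ m + β m * xr m) 0 := by
            refine Finset.sum_le_sum fun m hm => ?_
            have hmk : (m:ℕ) < k := (Finset.mem_filter.mp hm).2
            have : xr m = u m := by simp [hxr, hmk]
            rw [this]; exact le_max_left _ _
        _ ≤ ∑ m, max (γ m + β m * xr m) 0 :=
            Finset.sum_le_sum_of_subset_of_nonneg (Finset.subset_univ _)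
              (fun m _ _ => le_max_right _ _)
    exact le_trans h1 hval
  have hPminle : Pmin ≤ Pstar := by rw [hPmin]; exact max_le hPmaxle hPRle
  -- vertex optimal solution
  obtain ⟨x, hxb, hxs, hxv, hcard⟩ := exists_vertex_opt n γ β u Ω Pstar hPstar
  obtain ⟨f0, hF⟩ := Finset.card_le_one_iff_subset_singleton.mp hcard
  set J : Finset (Fin n) := Finset.univ.filter (fun m => x m = u m) with hJ_def
  have hJu : ∀ m ∈ J, x m = u m := fun m hm => (Finset.mem_filter.mp hm).2
  have hJusum : ∑ m ∈ J, u m = ∑ m ∈ J, x m :=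
    Finset.sum_congr rfl fun m hm => (hJu m hm).symm
  have hzero : ∀ m, ¬(0 < x m ∧ x m < u m) → x m ≠ u m →
      x m = 0 ∧ max (γ m + β m * x m) 0 = 0 := by
    intro m hnf hne
    have h2 : x m < u m := lt_of_le_of_ne (hxb m).2 hne
    have h0 : x m = 0 := by
      by_contra h
      exact hnf ⟨lt_of_le_of_ne (hxb m).1 (Ne.symm h), h2⟩
    refine ⟨h0, ?_⟩
    rw [h0, mul_zero, add_zero]
    exact max_eq_right (hγ m)
  have hnotmem : ∀ m, m ≠ f0 → ¬(0 < x m ∧ x m < u m) := by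
    intro m hm hfrac
    have : m ∈ ({f0} : Finset (Fin n)) :=
      hF (Finset.mem_filter.mpr ⟨Finset.mem_univ m, hfrac⟩)
    exact hm (Finset.mem_singleton.mp this)
  -- floor bound
  have hfloor : ∑ m ∈ J, (γ m + β m * u m) - n * K ≤
      K * ∑ m ∈ J, (⌊(γ m + β m * u m) / K⌋ : ℝ) := by
    have h1 : ∀ m ∈ J, (γ m + β m * u m) - K ≤ K * (⌊(γ m + β m * u m) / K⌋ : ℝ) := by
      intro m _
      have h2 := Int.sub_one_lt_floor ((γ m + β m * u m) / K)
      have h3 : (γ m + β m * u m) / K * K = γ m + β m * u m :=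
        div_mul_cancel₀ _ hKpos.ne'
      nlinarith
    have h4 : ∑ m ∈ J, ((γ m + β m * u m) - K) ≤
        ∑ m ∈ J, K * (⌊(γ m + β m * u m) / K⌋ : ℝ) := Finset.sum_le_sum h1
    have h5 : ∑ m ∈ J, ((γ m + β m * u m) - K) =
        ∑ m ∈ J, (γ m + β m * u m) - J.card * K := by
      rw [Finset.sum_sub_distrib, Finset.sum_const, nsmul_eq_mul]
    have h6 : (J.card : ℝ) ≤ n := by
      have h7 : J.card ≤ n := by simpa using Finset.card_le_univ J
      exact_mod_cast h7
    have h8 : (J.card : ℝ) * K ≤ n * K := mul_le_mul_of_nonneg_right h6 hKpos.le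
    rw [← Finset.mul_sum] at h4
    linarith
  -- the candidate set
  set S := {v : ℝ | ∃ (f : Option (Fin n)) (J : Finset (Fin n)),
        (∀ j ∈ J, some j ≠ f) ∧ (∑ j ∈ J, u j ≤ Ω) ∧
        v = K * (∑ j ∈ J, (⌊(γ j + β j * u j) / K⌋ : ℝ)) +
          phat f (Ω - ∑ j ∈ J, u j)} with hS_def
  have hSbdd : BddAbove S := by
    have hsub : S ⊆ Set.range (fun p : Option (Fin n) × Finset (Fin n) =>
        K * (∑ j ∈ p.2, (⌊(γ j + β j * u j) / K⌋ : ℝ)) + phat p.1 (Ω - ∑ j ∈ p.2, u j)) := by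
      rintro v ⟨f, J', -, -, rfl⟩; exact ⟨(f, J'), rfl⟩
    exact ((Set.finite_range _).subset hsub).bddAbove
  have hnK : n * K = ε * Pmin := by rw [hK]; field_simp
  have hfinal : ∀ v ∈ S, Pstar - n * K ≤ v → (1 - ε) * Pstar ≤ sSup S := by
    intro v hv hvge
    have h1 : v ≤ sSup S := le_csSup hSbdd hv
    have h2 : ε * Pmin ≤ ε * Pstar := mul_le_mul_of_nonneg_left hPminle hε0.le
    nlinarith
  by_cases hf0frac : 0 < x f0 ∧ x f0 < u f0
  · -- case A : f0 is fractional
    have hf0J : f0 ∉ J := by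
      intro h
      exact absurd (hJu f0 h) (ne_of_lt hf0frac.2)
    have hvanish : ∀ m ∈ Finset.univ, m ∉ insert f0 J → max (γ m + β m * x m) 0 = 0 := by
      intro m _ hm
      rw [Finset.mem_insert] at hm
      push_neg at hm
      exact (hzero m (hnotmem m hm.1) (fun h =>
        hm.2 (Finset.mem_filter.mpr ⟨Finset.mem_univ m, h⟩))).2
    have hPdecomp : Pstar = max (γ f0 + β f0 * x f0) 0 + ∑ m ∈ J, (γ m + β m * u m) := by
      rw [← hxv, ← Finset.sum_subset (Finset.subset_univ (insert f0 J)) hvanish,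
        Finset.sum_insert hf0J]
      congr 1
      exact Finset.sum_congr rfl fun m hm => by
        rw [hJu m hm]; exact max_eq_left (hpos m).le
    have hxvanish : ∀ m ∈ Finset.univ, m ∉ insert f0 J → x m = 0 := by
      intro m _ hm
      rw [Finset.mem_insert] at hm
      push_neg at hm
      exact (hzero m (hnotmem m hm.1) (fun h =>
        hm.2 (Finset.mem_filter.mpr ⟨Finset.mem_univ m, h⟩))).1
    have hsumx : x f0 + ∑ m ∈ J, x m ≤ Ω := by
      have := Finset.sum_subset (Finset.subset_univ (insert f0 J)) hxvanish
      rw [Finset.sum_insert hf0J] at this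
      linarith [this ▸ hxs]
    have hJΩ : ∑ m ∈ J, u m ≤ Ω := by rw [hJusum]; linarith [hf0frac.1]
    set Δ := Ω - ∑ m ∈ J, u m with hΔ_def
    have hxf0Δ : x f0 ≤ Δ := by rw [hΔ_def, hJusum]; linarith
    have hΔ0 : 0 ≤ Δ := le_trans hf0frac.1.le hxf0Δ
    have hphatge : max (γ f0 + β f0 * x f0) 0 ≤ phat (some f0) Δ := by
      rw [hphatsome f0 Δ hΔ0]
      refine max_le_max (add_le_add le_rfl ?_) le_rfl
      exact mul_le_mul_of_nonneg_left (le_min hxf0Δ (hxb f0).2) (hβ f0).le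
    refine hfinal (K * (∑ m ∈ J, (⌊(γ m + β m * u m) / K⌋ : ℝ)) + phat (some f0) Δ)
      ⟨some f0, J, fun m hm => by
        simp only [ne_eq, Option.some.injEq]
        exact fun h => hf0J (h ▸ hm), hJΩ, rfl⟩ ?_
    rw [hPdecomp]
    linarith
  · -- case B : no fractional variable
    have hnofrac : ∀ m, ¬(0 < x m ∧ x m < u m) := by
      intro m
      by_cases h : m = f0
      · subst h; exact hf0frac
      · exact hnotmem m h
    have hvanish : ∀ m ∈ Finset.univ, m ∉ J → max (γ m + β m * x m) 0 = 0 := by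
      intro m _ hm
      exact (hzero m (hnofrac m) (fun h =>
        hm (Finset.mem_filter.mpr ⟨Finset.mem_univ m, h⟩))).2
    have hPdecomp : Pstar = ∑ m ∈ J, (γ m + β m * u m) := by
      rw [← hxv, ← Finset.sum_subset (Finset.subset_univ J) hvanish]
      exact Finset.sum_congr rfl fun m hm => by
        rw [hJu m hm]; exact max_eq_left (hpos m).le
    have hJΩ : ∑ m ∈ J, u m ≤ Ω := by
      rw [hJusum]
      exact le_trans (Finset.sum_le_sum_of_subset_of_nonneg (Finset.subset_univ J)
        (fun m _ _ => (hxb m).1)) hxs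
    have hΔ0 : (0:ℝ) ≤ Ω - ∑ m ∈ J, u m := by linarith
    refine hfinal (K * (∑ m ∈ J, (⌊(γ m + β m * u m) / K⌋ : ℝ)) +
        phat none (Ω - ∑ m ∈ J, u m))
      ⟨none, J, fun m _ => by simp, hJΩ, rfl⟩ ?_
    rw [hphatnone _ hΔ0, hPdecomp]
    linarith
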